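/- Under the assumptions of the previous context, with the RIP-type bound replaced by (1 - (2k-1)μ)·‖Γ̂-Γ‖₂² ≤ ‖D(Γ̂-Γ)‖₂² for constants μ > 0 and k ≥ 1 with (2k-1)μ < 1: if k < (1/2)·(1 + (1/μ)·(1 - (2‖w‖₂ε/O)²)), then w^T Γ̂ + ω > 0. -/

import Mathlib

open Finset

noncomputable def dot {n : ℕ} (w v : Fin n → ℝ) : ℝ := ∑ i, w i * v i

noncomputable def l2 {n : ℕ} (v : Fin n → ℝ) : ℝ := Real.sqrt (∑ i, (v i) ^ 2)

noncomputable def linf {n : ℕ} (v : Fin n → ℝ) : ℝ := ⨆ i, |v i|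

noncomputable def l0 {n : ℕ} (v : Fin n → ℝ) : ℕ := (Finset.univ.filter (fun i => v i ≠ 0)).card

noncomputable def supp {n : ℕ} (v : Fin n → ℝ) : Finset (Fin n) := Finset.univ.filter (fun i => v i ≠ 0)

noncomputable def col {N M : ℕ} (D : Matrix (Fin N) (Fin M) ℝ) (j : Fin M) : Fin N → ℝ :=
  fun i => D i j

lemma l2_norm' {n : ℕ} (v : Fin n → ℝ) :
    l2 v = ‖(WithLp.equiv 2 (Fin n → ℝ)).symm v‖ := by
  simp [l2, EuclideanSpace.norm_eq, sq_abs]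

lemma l2_nonneg' {n : ℕ} (v : Fin n → ℝ) : 0 ≤ l2 v := Real.sqrt_nonneg _

lemma l2_tri' {n : ℕ} (a b : Fin n → ℝ) : l2 (a - b) ≤ l2 a + l2 b := by
  rw [l2_norm', l2_norm', l2_norm']
  exact norm_sub_le _ _

lemma dot_cauchy' {n : ℕ} (w v : Fin n → ℝ) : |dot w v| ≤ l2 w * l2 v := by
  rw [l2_norm', l2_norm']
  have h : dot w v = inner ℝ ((WithLp.equiv 2 (Fin n → ℝ)).symm w)
      ((WithLp.equiv 2 (Fin n → ℝ)).symm v) := by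
    simp [dot, PiLp.inner_apply, RCLike.inner_apply]
    exact Finset.sum_congr rfl (fun i _ => mul_comm _ _)
  rw [h]
  exact abs_real_inner_le_norm _ _

lemma dot_sub' {n : ℕ} (w a b : Fin n → ℝ) : dot w (a - b) = dot w a - dot w b := by
  simp [dot, mul_sub, Finset.sum_sub_distrib]

theorem stmt4 {N M : ℕ} (D : Matrix (Fin N) (Fin M) ℝ) (Γ Γhat : Fin M → ℝ)
    (Y : Fin N → ℝ) (ε μ k : ℝ) (w : Fin M → ℝ) (ω : ℝ)
    (hY1 : l2 (Y - D.mulVec Γ) ≤ ε) (hY2 : l2 (Y - D.mulVec Γhat) ≤ ε)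
    (hμ : 0 < μ) (hk1 : 1 ≤ k) (hkμ : (2 * k - 1) * μ < 1)
    (hrip : (1 - (2 * k - 1) * μ) * (l2 (Γhat - Γ)) ^ 2 ≤ (l2 (D.mulVec (Γhat - Γ))) ^ 2)
    (hO : dot w Γ + ω > 0)
    (hksmall : k < (1 / 2) * (1 + (1 / μ) * (1 - (2 * l2 w * ε / (dot w Γ + ω)) ^ 2))) :
    dot w Γhat + ω > 0 := by
  set O := dot w Γ + ω with hOdef
  set Δ : Fin M → ℝ := Γhat - Γ with hΔ
  set A := l2 w with hA
  set T := l2 Δ with hT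
  have hε0 : 0 ≤ ε := le_trans (l2_nonneg' _) hY1
  have hA0 : 0 ≤ A := l2_nonneg' _
  have hT0 : 0 ≤ T := l2_nonneg' _
  set m := (2 * k - 1) * μ with hm
  -- bound on ‖DΔ‖
  have hDeq : D.mulVec Δ = (Y - D.mulVec Γ) - (Y - D.mulVec Γhat) := by
    rw [hΔ, Matrix.mulVec_sub]
    abel
  have hDΔ : l2 (D.mulVec Δ) ≤ 2 * ε := by
    rw [hDeq]
    calc l2 ((Y - D.mulVec Γ) - (Y - D.mulVec Γhat))
        ≤ l2 (Y - D.mulVec Γ) + l2 (Y - D.mulVec Γhat) := l2_tri' _ _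
      _ ≤ 2 * ε := by linarith
  have hDΔsq : (1 - m) * T ^ 2 ≤ 4 * ε ^ 2 := by
    have h1 : (l2 (D.mulVec Δ)) ^ 2 ≤ (2 * ε) ^ 2 := by
      have := l2_nonneg' (D.mulVec Δ)
      nlinarith
    nlinarith [hrip]
  -- from hksmall
  have hq : (2 * A * ε / O) ^ 2 < 1 - m := by
    have h3 : 1 / 2 * (1 + 1 / μ * (1 - (2 * A * ε / O) ^ 2)) * μ
        = μ / 2 + (1 - (2 * A * ε / O) ^ 2) / 2 := by
      field_simp
    have h2 := mul_lt_mul_of_pos_right hksmall hμ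
    rw [h3] at h2
    have hm' : m = 2 * (k * μ) - μ := by rw [hm]; ring
    rw [hm']
    linarith
  have h1m : 0 < 1 - m := lt_of_le_of_lt (sq_nonneg _) hq
  have hO2 : (0:ℝ) < O ^ 2 := pow_pos hO 2
  have hq2 : (2 * A * ε) ^ 2 < (1 - m) * O ^ 2 := by
    rw [div_pow] at hq
    exact (div_lt_iff₀ hO2).mp hq
  have hdot : |dot w Δ| ≤ A * T := dot_cauchy' w Δ
  have hsub : dot w Δ = dot w Γhat - dot w Γ := dot_sub' w Γhat Γ
  clear_value O Δ A T m
  -- key: A * T < O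
  have hkey : A * T < O := by
    rcases eq_or_lt_of_le hT0 with hTz | hTpos
    · rw [← hTz, mul_zero]; exact hO
    · rcases eq_or_lt_of_le hε0 with hεz | hεpos
      · exfalso
        rw [← hεz] at hDΔsq
        nlinarith [mul_pos h1m (pow_pos hTpos 2)]
      · have h4 := mul_lt_mul_of_pos_right hq2 (pow_pos hTpos 2)
        have h5 := mul_le_mul_of_nonneg_right hDΔsq (le_of_lt hO2)
        have h6 : A ^ 2 * T ^ 2 * (4 * ε ^ 2) < O ^ 2 * (4 * ε ^ 2) := by nlinarith [h4, h5]
        have h7 : A ^ 2 * T ^ 2 < O ^ 2 := lt_of_mul_lt_mul_right h6 (by positivity)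
        by_contra hcon
        push_neg at hcon
        have h8 : O ^ 2 ≤ (A * T) ^ 2 := pow_le_pow_left₀ (le_of_lt hO) hcon 2
        have h9 : (A * T) ^ 2 = A ^ 2 * T ^ 2 := by ring
        linarith
  have := abs_le.mp hdot
  linarith [this.1]
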